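/- If λ, μ, ν are partitions with λ_i = μ_i + ν_i for all i, then the Littlewood–Richardson coefficient c^λ_{μν} equals 1. -/

import Mathlib

open Finset MvPolynomial

/-- Complete homogeneous symmetric polynomial of degree `m` in `M` variables. -/
noncomputable def hsymm (M m : ℕ) : MvPolynomial (Fin M) ℚ :=
  ∑ d ∈ Finset.Nat.antidiagonalTuple M m, ∏ i, (X i : MvPolynomial (Fin M) ℚ) ^ d i

/-- `h_m` with integer index (`0` for negative `m`). -/
noncomputable def hIdx (M : ℕ) (m : ℤ) : MvPolynomial (Fin M) ℚ :=
  if 0 ≤ m then hsymm M m.toNat else 0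

/-- The Schur polynomial of the partition `λ` (a tuple of length `t`, weakly decreasing)
in `M` variables, via the Jacobi–Trudi determinant `s_λ = det(h_{λ_i − i + j})`. -/
noncomputable def schurJT (M t : ℕ) (lam : Fin t → ℕ) : MvPolynomial (Fin M) ℚ :=
  Matrix.det (Matrix.of fun i j : Fin t =>
    hIdx M ((lam i : ℤ) + ((j : ℕ) : ℤ) - ((i : ℕ) : ℤ)))

/-- The finite set of partitions of `K` with at most `k` parts, as weakly decreasing
`k`-tuples summing to `K`. -/
def partitionTuples (k K : ℕ) : Finset (Fin k → ℕ) :=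
  (Finset.Nat.antidiagonalTuple k K).filter fun κ => ∀ i j : Fin k, i ≤ j → κ j ≤ κ i

/-- The conjugate partition: `(conjPart r λ) i = #{j | λ_j ≥ i + 1}` (0-indexed `i`). -/
def conjPart (r : ℕ) {k : ℕ} (lam : Fin k → ℕ) : Fin r → ℕ :=
  fun i => (Finset.univ.filter fun j : Fin k => (i : ℕ) < lam j).card

namespace LR

variable {K : ℕ}

/-! ### Lex order lemmas -/

theorem lexlt_def {x y : Fin K → ℕ} :
    toLex x < toLex y ↔ ∃ i, (∀ j, j < i → x j = y j) ∧ x i < y i := Iff.rfl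

theorem lexle_iff {x y : Fin K → ℕ} :
    toLex x ≤ toLex y ↔ toLex x < toLex y ∨ x = y := by
  rw [le_iff_lt_or_eq]
  constructor <;> rintro (h | h)
  · exact Or.inl h
  · exact Or.inr (toLex.injective h)
  · exact Or.inl h
  · exact Or.inr (congrArg toLex h)

theorem lex_add_right_lt {x y z : Fin K → ℕ} (h : toLex x < toLex y) :
    toLex (x + z) < toLex (y + z) := by
  obtain ⟨i, h1, h2⟩ := lexlt_def.mp h
  exact lexlt_def.mpr ⟨i, fun j hj => by simp [h1 j hj], by simpa using h2⟩

theorem lex_add_right_le {x y z : Fin K → ℕ} (h : toLex x ≤ toLex y) :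
    toLex (x + z) ≤ toLex (y + z) := by
  rcases lexle_iff.mp h with h | rfl
  · exact le_of_lt (lex_add_right_lt h)
  · rfl

theorem lex_add_left_le {x y z : Fin K → ℕ} (h : toLex x ≤ toLex y) :
    toLex (z + x) ≤ toLex (z + y) := by
  rw [add_comm z x, add_comm z y]; exact lex_add_right_le h

theorem lex_add_lt_of_lt_of_le {u a v b : Fin K → ℕ} (h1 : toLex u < toLex a)
    (h2 : toLex v ≤ toLex b) : toLex (u + v) < toLex (a + b) :=
  lt_of_lt_of_le (lex_add_right_lt h1) (lex_add_left_le h2)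

theorem lex_add_le_of_le_of_le {u a v b : Fin K → ℕ} (h1 : toLex u ≤ toLex a)
    (h2 : toLex v ≤ toLex b) : toLex (u + v) ≤ toLex (a + b) :=
  le_trans (lex_add_right_le h1) (lex_add_left_le h2)

/-! ### bounded-by-lex for polynomials -/

/-- conversion of a tuple to a finsupp exponent -/
noncomputable def fs (a : Fin K → ℕ) : Fin K →₀ ℕ := Finsupp.equivFunOnFinite.symm a

@[simp] theorem coe_fs (a : Fin K → ℕ) : ⇑(fs a) = a := rfl

theorem fs_add (a b : Fin K → ℕ) : fs (a + b) = fs a + fs b := by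
  ext i; simp

/-- All monomials of `p` are lex-bounded by `x^a`. -/
def BoundedBy (p : MvPolynomial (Fin K) ℚ) (a : Fin K → ℕ) : Prop :=
  ∀ e : Fin K →₀ ℕ, coeff e p ≠ 0 → toLex (⇑e) ≤ toLex a

theorem BoundedBy.coeff_eq_zero {p : MvPolynomial (Fin K) ℚ} {a : Fin K → ℕ}
    (hp : BoundedBy p a) {e : Fin K →₀ ℕ} (h : toLex a < toLex (⇑e)) : coeff e p = 0 := by
  by_contra hne
  exact absurd (lt_of_lt_of_le h (hp e hne)) (lt_irrefl _)

theorem BoundedBy.mono {p : MvPolynomial (Fin K) ℚ} {a b : Fin K → ℕ}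
    (hp : BoundedBy p a) (h : toLex a ≤ toLex b) : BoundedBy p b :=
  fun e he => le_trans (hp e he) h

theorem BoundedBy.mul {p q : MvPolynomial (Fin K) ℚ} {a b : Fin K → ℕ}
    (hp : BoundedBy p a) (hq : BoundedBy q b) : BoundedBy (p * q) (a + b) := by
  intro e he
  rw [MvPolynomial.coeff_mul] at he
  obtain ⟨⟨u, v⟩, huv, hne⟩ := Finset.exists_ne_zero_of_sum_ne_zero he
  rw [Finset.HasAntidiagonal.mem_antidiagonal] at huv
  have hu : coeff u p ≠ 0 := fun h => hne (by simp [h])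
  have hv : coeff v q ≠ 0 := fun h => hne (by simp [h])
  have : ⇑e = ⇑u + ⇑v := by rw [← huv]; simp
  rw [this]
  exact lex_add_le_of_le_of_le (hp u hu) (hq v hv)

theorem coeff_mul_of_boundedBy {p q : MvPolynomial (Fin K) ℚ} {a b : Fin K → ℕ}
    (hp : BoundedBy p a) (hq : BoundedBy q b) :
    coeff (fs (a + b)) (p * q) = coeff (fs a) p * coeff (fs b) q := by
  rw [MvPolynomial.coeff_mul]
  apply Finset.sum_eq_single_of_mem (fs a, fs b)
  · rw [Finset.HasAntidiagonal.mem_antidiagonal, ← fs_add]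
  · rintro ⟨u, v⟩ huv hne
    rw [Finset.HasAntidiagonal.mem_antidiagonal] at huv
    by_cases hu : coeff u p = 0
    · simp [hu]
    by_cases hv : coeff v q = 0
    · simp [hv]
    exfalso
    have hule := hp u hu
    have hvle := hq v hv
    have hsum : ⇑u + ⇑v = a + b := by
      rw [← Finsupp.coe_add, huv, coe_fs]
    by_cases hua : ⇑u = a
    · have hu' : u = fs a := DFunLike.coe_injective (by simp only [coe_fs]; exact hua)
      have hv' : v = fs b := by
        have h2 : u + v = u + fs b := by rw [huv, hu', ← fs_add]
        exact add_left_cancel h2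
      exact hne (by rw [hu', hv'])
    · have hult : toLex (⇑u) < toLex a :=
        lt_of_le_of_ne hule (fun h => hua (toLex.injective h))
      have := lex_add_lt_of_lt_of_le hult hvle
      rw [hsum] at this
      exact lt_irrefl _ this

/-- the alternant `det(x_j^{β_i})` -/
noncomputable def alt (β : Fin K → ℕ) : MvPolynomial (Fin K) ℚ :=
  (Matrix.of fun i j : Fin K => (X j : MvPolynomial (Fin K) ℚ) ^ β i).det

theorem prod_X_pow (d : Fin K → ℕ) :
    (∏ i, (X i : MvPolynomial (Fin K) ℚ) ^ d i) = monomial (fs d) 1 := by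
  rw [← MvPolynomial.prod_X_pow_eq_monomial]
  exact (Finset.prod_subset (Finset.subset_univ _) (fun x _ hx => by
    have : (fs d) x = 0 := by simpa using hx
    simp only [coe_fs] at this ⊢
    simp [this])).symm

theorem alt_eq_sum (β : Fin K → ℕ) :
    alt β = ∑ σ : Equiv.Perm (Fin K),
      (Equiv.Perm.sign σ : ℤ) • (monomial (fs (β ∘ σ)) (1 : ℚ)) := by
  rw [alt, Matrix.det_apply]
  refine Finset.sum_congr rfl fun σ _ => ?_
  rw [← prod_X_pow (β ∘ σ)]
  simp only [Matrix.of_apply, Units.smul_def, zsmul_eq_mul, Function.comp_apply]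

theorem coeff_alt_apply (β : Fin K → ℕ) (e : Fin K →₀ ℕ) :
    coeff e (alt β) = ∑ σ : Equiv.Perm (Fin K),
      if fs (β ∘ σ) = e then ((Equiv.Perm.sign σ : ℤ) : ℚ) else 0 := by
  rw [alt_eq_sum]
  rw [MvPolynomial.coeff_sum]
  refine Finset.sum_congr rfl fun σ _ => ?_
  rw [MvPolynomial.coeff_smul, MvPolynomial.coeff_monomial]
  split_ifs <;> simp

theorem comp_perm_lex_le {β : Fin K → ℕ} (hβ : StrictAnti β) (σ : Equiv.Perm (Fin K)) :
    toLex (β ∘ σ) ≤ toLex β := by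
  by_cases hid : ∀ i, σ i = i
  · have : β ∘ σ = β := funext fun i => by rw [Function.comp_apply, hid]
    rw [this]
  · push_neg at hid
    obtain ⟨i₀, hi₀⟩ := hid
    set s : Finset (Fin K) := Finset.univ.filter (fun i => σ i ≠ i) with hs
    have hsne : s.Nonempty := ⟨i₀, by simp [hs, hi₀]⟩
    set i := s.min' hsne with hi
    have hfix : ∀ j, j < i → σ j = j := by
      intro j hj
      by_contra hne
      exact absurd hj (Finset.min'_le s j (by simp [hs, hne])).not_gt
    have hσi : σ i ≠ i := by
      have := Finset.min'_mem s hsne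
      simpa [hs] using this
    have hlt : i < σ i := by
      rcases lt_or_gt_of_ne hσi with h | h
      · exfalso
        have hfix2 : σ (σ i) = σ i := hfix (σ i) h
        have : σ i = i := σ.injective (by rw [hfix2])
        exact hσi this
      · exact h
    apply le_of_lt
    exact ⟨i, fun j hj => by simp [hfix j hj], by simpa using hβ hlt⟩

theorem coeff_alt_self {β : Fin K → ℕ} (hβ : Function.Injective β) :
    coeff (fs β) (alt β) = 1 := by
  rw [coeff_alt_apply]
  rw [Finset.sum_eq_single (1 : Equiv.Perm (Fin K))]
  · simp
  · intro σ _ hσ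
    rw [if_neg]
    intro h
    have hcomp : β ∘ σ = β := by
      have := congrArg (DFunLike.coe) h
      simpa using this
    apply hσ
    ext i
    exact congrArg Fin.val (hβ (congrFun hcomp i))
  · simp

theorem boundedBy_alt {β : Fin K → ℕ} (hβ : StrictAnti β) : BoundedBy (alt β) β := by
  intro e he
  rw [coeff_alt_apply] at he
  obtain ⟨σ, _, hσ⟩ := Finset.exists_ne_zero_of_sum_ne_zero he
  have h : fs (β ∘ σ) = e := by
    by_contra h
    rw [if_neg h] at hσ
    exact hσ rfl
  have : ⇑e = β ∘ σ := by rw [← h, coe_fs]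
  rw [this]
  exact comp_perm_lex_le hβ σ



variable {M : ℕ}

/-- geometric series `∑ x_i^m t^m` -/
noncomputable def geom (M : ℕ) (i : Fin M) : PowerSeries (MvPolynomial (Fin M) ℚ) :=
  PowerSeries.mk fun m => X i ^ m

/-- `H(t) = ∑ h_m t^m` -/
noncomputable def Hs (M : ℕ) : PowerSeries (MvPolynomial (Fin M) ℚ) :=
  PowerSeries.mk fun m => hsymm M m

/-- `∏_{i ≠ j} (1 - x_i t)` -/
noncomputable def Ef (M : ℕ) (j : Fin M) : PowerSeries (MvPolynomial (Fin M) ℚ) :=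
  ∏ i ∈ Finset.univ.erase j, (1 - PowerSeries.C (X i) * PowerSeries.X)

theorem one_sub_mul_geom (i : Fin M) :
    (1 - PowerSeries.C (X i) * PowerSeries.X) * geom M i = 1 := by
  ext n
  rw [sub_mul, one_mul, map_sub, mul_assoc]
  rw [PowerSeries.coeff_C_mul]
  cases n with
  | zero => simp [geom, PowerSeries.coeff_one, PowerSeries.coeff_zero_eq_constantCoeff]
  | succ n =>
    rw [PowerSeries.coeff_succ_X_mul]
    simp [geom, PowerSeries.coeff_one, pow_succ, mul_comm]

theorem Hs_eq_prod : Hs M = ∏ i : Fin M, geom M i := by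
  apply PowerSeries.ext; intro d
  rw [PowerSeries.coeff_prod]
  have hl : (PowerSeries.coeff d) (Hs M) = _root_.hsymm M d := PowerSeries.coeff_mk _ _
  rw [hl]
  unfold _root_.hsymm
  refine Finset.sum_nbij' (fun d : Fin M → ℕ => Finsupp.equivFunOnFinite.symm d)
    (fun l : Fin M →₀ ℕ => (l : Fin M → ℕ)) ?_ ?_ ?_ ?_ ?_
  · intro a ha
    rw [Finset.mem_finsuppAntidiag]
    refine ⟨?_, Finset.subset_univ _⟩
    have := (Finset.Nat.mem_antidiagonalTuple).mp ha
    simpa using this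
  · intro l hl
    rw [Finset.mem_finsuppAntidiag] at hl
    rw [Finset.Nat.mem_antidiagonalTuple]
    simpa using hl.1
  · intro a _; rfl
  · intro l _; exact Equiv.symm_apply_apply _ l
  · intro a _
    refine Finset.prod_congr rfl fun i _ => ?_
    rw [geom, PowerSeries.coeff_mk]
    rfl

theorem Ef_mul_Hs (j : Fin M) : Ef M j * Hs M = geom M j := by
  rw [Hs_eq_prod, ← Finset.mul_prod_erase Finset.univ _ (Finset.mem_univ j)]
  rw [Ef, mul_left_comm, ← Finset.prod_mul_distrib]
  rw [Finset.prod_congr rfl fun i _ => one_sub_mul_geom i]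
  simp

theorem coeff_Ef_eq_zero (j : Fin M) {k : ℕ} (hk : M ≤ k) :
    PowerSeries.coeff k (Ef M j) = 0 := by
  rw [Ef, PowerSeries.coeff_prod]
  apply Finset.sum_eq_zero
  intro l hl
  rw [Finset.mem_finsuppAntidiag] at hl
  have hcard : (Finset.univ.erase j).card = M - 1 := by
    rw [Finset.card_erase_of_mem (Finset.mem_univ j), Finset.card_univ, Fintype.card_fin]
  have : ∃ i ∈ Finset.univ.erase j, 2 ≤ l i := by
    by_contra hno
    push_neg at hno
    have hle : ∑ i ∈ Finset.univ.erase j, l i ≤ (Finset.univ.erase j).card * 1 := by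
      apply Finset.sum_le_card_nsmul
      intro i hi
      exact Nat.lt_succ_iff.mp (hno i hi)
    rw [hl.1] at hle
    have hM1 : (1 : ℕ) ≤ M := Nat.one_le_iff_ne_zero.mpr (by rintro rfl; exact j.elim0)
    omega
  obtain ⟨i, hi, h2⟩ := this
  apply Finset.prod_eq_zero hi
  rw [map_sub, PowerSeries.coeff_one, PowerSeries.coeff_C_mul, PowerSeries.coeff_X]
  rw [if_neg (by omega), if_neg (by omega)]
  simp

/-- key scalar identity -/
theorem sum_coeff_Ef_hIdx (j : Fin M) (b : ℕ) :
    ∑ k ∈ Finset.range M, PowerSeries.coeff k (Ef M j) * hIdx M ((b : ℤ) - k) =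
      X j ^ b := by
  have hkey := congrArg (PowerSeries.coeff b) (Ef_mul_Hs j)
  rw [PowerSeries.coeff_mul, Finset.Nat.sum_antidiagonal_eq_sum_range_succ_mk] at hkey
  rw [geom, PowerSeries.coeff_mk] at hkey
  have h1 : ∀ u ∈ Finset.range (b + 1),
      PowerSeries.coeff u (Ef M j) * (PowerSeries.coeff (b - u)) (Hs M)
      = PowerSeries.coeff u (Ef M j) * hIdx M ((b : ℤ) - u) := by
    intro u hu
    rw [Finset.mem_range] at hu
    congr 1
    rw [Hs, PowerSeries.coeff_mk, hIdx, if_pos (by omega)]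
    congr 1
    omega
  rw [Finset.sum_congr rfl h1] at hkey
  rw [← hkey]
  set f : ℕ → MvPolynomial (Fin M) ℚ :=
    fun k => PowerSeries.coeff k (Ef M j) * hIdx M ((b : ℤ) - k) with hf
  have e1 : ∑ k ∈ Finset.range M, f k = ∑ k ∈ Finset.range (max M (b+1)), f k := by
    apply Finset.sum_subset (Finset.range_subset_range.mpr (le_max_left _ _))
    intro k _ hk
    rw [Finset.mem_range, not_lt] at hk
    rw [hf]
    simp only []
    rw [coeff_Ef_eq_zero j hk, zero_mul]
  have e2 : ∑ k ∈ Finset.range (b+1), f k = ∑ k ∈ Finset.range (max M (b+1)), f k := by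
    apply Finset.sum_subset (Finset.range_subset_range.mpr (le_max_right _ _))
    intro k _ hk
    rw [Finset.mem_range, not_lt] at hk
    rw [hf]
    simp only []
    rw [hIdx, if_neg (by omega), mul_zero]
  rw [e1, ← e2]

/-! ### matrices -/

/-- `b`-vector: `κ_i + (M-1-i)` -/
def bvec (M : ℕ) (κ : Fin M → ℕ) : Fin M → ℕ := fun i => κ i + (M - 1 - (i : ℕ))

noncomputable def JTmat (M : ℕ) (κ : Fin M → ℕ) : Matrix (Fin M) (Fin M) (MvPolynomial (Fin M) ℚ) :=
  Matrix.of fun i j : Fin M => hIdx M ((κ i : ℤ) + ((j : ℕ) : ℤ) - ((i : ℕ) : ℤ))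

noncomputable def Emat (M : ℕ) : Matrix (Fin M) (Fin M) (MvPolynomial (Fin M) ℚ) :=
  Matrix.of fun k j : Fin M => PowerSeries.coeff (M - 1 - (k : ℕ)) (Ef M j)

theorem schurJT_eq_det (κ : Fin M → ℕ) : schurJT M M κ = (JTmat M κ).det := rfl

theorem JTmat_mul_Emat (κ : Fin M → ℕ) :
    JTmat M κ * Emat M = Matrix.of fun i j : Fin M => (X j : MvPolynomial (Fin M) ℚ) ^ bvec M κ i := by
  ext i j : 2
  rw [Matrix.mul_apply]
  have hrev : ∀ F : Fin M → MvPolynomial (Fin M) ℚ, ∑ j' : Fin M, F j' = ∑ k : Fin M, F k.rev :=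
    fun F => (Fintype.sum_bijective Fin.rev Fin.rev_bijective _ _ (fun k => rfl)).symm
  rw [hrev (fun j' => JTmat M κ i j' * Emat M j' j)]
  have hterm : ∀ k : Fin M, JTmat M κ i k.rev * Emat M k.rev j
      = PowerSeries.coeff (k : ℕ) (Ef M j) * hIdx M ((bvec M κ i : ℤ) - (k : ℕ)) := by
    intro k
    have hi : (i : ℕ) < M := i.isLt
    have hk : (k : ℕ) < M := k.isLt
    show hIdx M ((κ i : ℤ) + ((k.rev : ℕ) : ℤ) - ((i : ℕ) : ℤ)) * _ = _
    rw [Fin.val_rev]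
    have h1 : ((κ i : ℤ) + ((M - (k + 1) : ℕ) : ℤ) - ((i : ℕ) : ℤ))
        = ((bvec M κ i : ℤ) - ((k : ℕ) : ℤ)) := by
      unfold bvec
      push_cast [Nat.cast_sub (by omega : (k : ℕ) + 1 ≤ M)]
      have h2 : ((M - 1 - (i : ℕ) : ℕ) : ℤ) = (M : ℤ) - 1 - (i : ℕ) := by
        push_cast [Nat.cast_sub (by omega : (i : ℕ) ≤ M - 1), Nat.cast_sub (by omega : 1 ≤ M)]
        ring
      rw [h2]
      ring
    have h3 : M - 1 - (M - ((k : ℕ) + 1)) = (k : ℕ) := by omega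
    rw [h1]
    rw [show Emat M k.rev j = PowerSeries.coeff (M - 1 - (k.rev : ℕ)) (Ef M j) from rfl]
    rw [Fin.val_rev, h3, mul_comm]
  rw [Finset.sum_congr rfl (fun k _ => hterm k)]
  rw [Fin.sum_univ_eq_sum_range (fun k => PowerSeries.coeff k (Ef M j) * hIdx M ((bvec M κ i : ℤ) - k)) M]
  rw [sum_coeff_Ef_hIdx j (bvec M κ i)]
  rfl

theorem hIdx_zero_eq_one : hIdx M 0 = 1 := by
  rw [hIdx, if_pos le_rfl]
  unfold _root_.hsymm
  rw [Int.toNat_zero, Finset.Nat.antidiagonalTuple_zero_right, Finset.sum_singleton]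
  simp

theorem schurJT_zero : schurJT M M (fun _ => 0) = 1 := by
  rw [schurJT_eq_det]
  have htri : (JTmat M (fun _ => 0)).BlockTriangular id := by
    intro i j hij
    rw [JTmat, Matrix.of_apply, hIdx, if_neg]
    simp only [id_eq] at hij
    have : (j : ℕ) < (i : ℕ) := hij
    push_cast
    omega
  rw [Matrix.det_of_upperTriangular htri]
  have : ∀ i : Fin M, JTmat M (fun _ => 0) i i = 1 := by
    intro i
    rw [JTmat, Matrix.of_apply]
    have : ((0 : ℕ) : ℤ) + (i : ℕ) - (i : ℕ) = 0 := by ring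
    rw [this, hIdx_zero_eq_one]
  rw [Finset.prod_congr rfl (fun i _ => this i)]
  simp

theorem schurJT_mul_det_Emat (κ : Fin M → ℕ) :
    schurJT M M κ * (Emat M).det = alt (bvec M κ) := by
  rw [schurJT_eq_det, ← Matrix.det_mul, JTmat_mul_Emat]
  rfl

theorem det_Emat_eq : (Emat M).det = alt (bvec M (fun _ => 0)) := by
  have := schurJT_mul_det_Emat (M := M) (fun _ => 0)
  rwa [schurJT_zero, one_mul] at this

/-- The Jacobi-Trudi / bialternant bridge. -/
theorem schurJT_mul_alt (κ : Fin M → ℕ) :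
    schurJT M M κ * alt (bvec M (fun _ => 0)) = alt (bvec M κ) := by
  rw [← det_Emat_eq, schurJT_mul_det_Emat]


/-! ### main argument -/

variable {K : ℕ}

theorem coeff_natCast_mul (n : ℕ) (p : MvPolynomial (Fin K) ℚ) (e : Fin K →₀ ℕ) :
    coeff e ((n : MvPolynomial (Fin K) ℚ) * p) = (n : ℚ) * coeff e p := by
  rw [← map_natCast (C : ℚ →+* MvPolynomial (Fin K) ℚ) n, MvPolynomial.coeff_C_mul]

theorem strictAnti_bvec {κ : Fin K → ℕ} (hκ : Antitone κ) : StrictAnti (bvec K κ) := by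
  intro i j hij
  have h1 : κ j ≤ κ i := hκ (le_of_lt hij)
  have h2 : (i : ℕ) < (j : ℕ) := hij
  have h3 : (j : ℕ) < K := j.isLt
  unfold bvec
  omega

theorem antitone_of_mem_partitionTuples {κ : Fin K → ℕ} (h : κ ∈ partitionTuples K K) :
    Antitone κ := by
  rw [partitionTuples, Finset.mem_filter] at h
  exact fun i j hij => h.2 i j hij

theorem lr_main {K : ℕ} (μ ν lam : Fin K → ℕ)
    (hμ : Antitone μ) (hν : Antitone ν)
    (hK : ∑ i, μ i + ∑ i, ν i = K)
    (hlam : ∀ i, lam i = μ i + ν i)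
    (c : (Fin K → ℕ) → ℕ)
    (hc : schurJT K K μ * schurJT K K ν =
      ∑ κ ∈ partitionTuples K K, (c κ : MvPolynomial (Fin K) ℚ) * schurJT K K κ) :
    c lam = 1 := by
  classical
  haveI : WellFoundedLT (Fin K) := inferInstance
  set P := partitionTuples K K with hP
  set z : Fin K → ℕ := fun _ => 0 with hz
  set δ0 : Fin K → ℕ := bvec K z with hδ0
  -- the master polynomial identity
  have e1 : alt (bvec K μ) * alt (bvec K ν) =
      ∑ κ ∈ P, (c κ : MvPolynomial (Fin K) ℚ) * (alt δ0 * alt (bvec K κ)) := by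
    rw [← schurJT_mul_alt μ, ← schurJT_mul_alt ν]
    have : (schurJT K K μ * alt δ0) * (schurJT K K ν * alt δ0)
        = (schurJT K K μ * schurJT K K ν) * (alt δ0 * alt δ0) := by ring
    rw [this, hc, Finset.sum_mul]
    refine Finset.sum_congr rfl fun κ _ => ?_
    rw [← schurJT_mul_alt κ]
    ring
  have hδanti : StrictAnti δ0 := strictAnti_bvec (fun _ _ _ => le_refl 0)
  have hBδ : BoundedBy (alt δ0) δ0 := boundedBy_alt hδanti
  have hBμ : BoundedBy (alt (bvec K μ)) (bvec K μ) := boundedBy_alt (strictAnti_bvec hμ)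
  have hBν : BoundedBy (alt (bvec K ν)) (bvec K ν) := boundedBy_alt (strictAnti_bvec hν)
  have hlamanti : Antitone lam := by
    intro i j hij
    rw [hlam i, hlam j]
    exact add_le_add (hμ hij) (hν hij)
  have hlamP : lam ∈ P := by
    rw [hP, partitionTuples, Finset.mem_filter]
    constructor
    · rw [Finset.Nat.mem_antidiagonalTuple]
      rw [Finset.sum_congr rfl fun i _ => hlam i, Finset.sum_add_distrib]
      exact hK
    · exact fun i j hij => hlamanti hij
  -- bvec as addition
  have hbvec_add : ∀ κ : Fin K → ℕ, bvec K κ = κ + δ0 := by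
    intro κ
    funext i
    show κ i + (K - 1 - (i : ℕ)) = κ i + (0 + (K - 1 - (i : ℕ)))
    omega
  have hvecsum : bvec K μ + bvec K ν = δ0 + bvec K lam := by
    funext i
    show (μ i + (K - 1 - (i:ℕ))) + (ν i + (K - 1 - (i:ℕ)))
        = (0 + (K - 1 - (i:ℕ))) + (lam i + (K - 1 - (i:ℕ)))
    rw [hlam i]
    omega
  -- coefficient of RHS at fs (δ0 + bvec γ) for lex-dominant γ
  have hRHS : ∀ γ ∈ P, (∀ κ ∈ P, c κ ≠ 0 → toLex κ ≤ toLex γ) →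
      coeff (fs (δ0 + bvec K γ))
        (∑ κ ∈ P, (c κ : MvPolynomial (Fin K) ℚ) * (alt δ0 * alt (bvec K κ))) = (c γ : ℚ) := by
    intro γ hγP hγmax
    rw [MvPolynomial.coeff_sum]
    rw [Finset.sum_eq_single_of_mem γ hγP]
    · rw [coeff_natCast_mul]
      have hBγ : BoundedBy (alt (bvec K γ)) (bvec K γ) :=
        boundedBy_alt (strictAnti_bvec (antitone_of_mem_partitionTuples hγP))
      rw [coeff_mul_of_boundedBy hBδ hBγ, coeff_alt_self hδanti.injective,
        coeff_alt_self (strictAnti_bvec (antitone_of_mem_partitionTuples hγP)).injective]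
      ring
    · intro κ hκP hne
      rw [coeff_natCast_mul]
      by_cases hcκ : c κ = 0
      · rw [hcκ]; simp
      have hκle : toLex κ ≤ toLex γ := hγmax κ hκP hcκ
      have hκlt : toLex κ < toLex γ := lt_of_le_of_ne hκle (fun h => hne (toLex.injective h))
      have hblt : toLex (bvec K κ) < toLex (bvec K γ) := by
        rw [hbvec_add κ, hbvec_add γ]
        exact lex_add_right_lt hκlt
      have hdlt : toLex (δ0 + bvec K κ) < toLex (δ0 + bvec K γ) := by
        rw [add_comm δ0 (bvec K κ), add_comm δ0 (bvec K γ)]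
        exact lex_add_right_lt hblt
      have hBκ : BoundedBy (alt δ0 * alt (bvec K κ)) (δ0 + bvec K κ) :=
        hBδ.mul (boundedBy_alt (strictAnti_bvec (antitone_of_mem_partitionTuples hκP)))
      rw [hBκ.coeff_eq_zero (by rw [coe_fs]; exact hdlt), mul_zero]
  -- the set of nonzero coefficients
  set S := P.filter (fun κ => c κ ≠ 0) with hS
  have hSne : S.Nonempty := by
    by_contra h
    rw [Finset.not_nonempty_iff_eq_empty] at h
    have hzero : alt (bvec K μ) * alt (bvec K ν) = 0 := by
      rw [e1]
      apply Finset.sum_eq_zero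
      intro κ hκ
      have : c κ = 0 := by
        by_contra hcκ
        have : κ ∈ S := Finset.mem_filter.mpr ⟨hκ, hcκ⟩
        rw [h] at this
        exact absurd this (Finset.notMem_empty κ)
      rw [this]; simp
    have h1 : coeff (fs (bvec K μ + bvec K ν)) (alt (bvec K μ) * alt (bvec K ν)) = 1 := by
      rw [coeff_mul_of_boundedBy hBμ hBν, coeff_alt_self (strictAnti_bvec hμ).injective,
        coeff_alt_self (strictAnti_bvec hν).injective, mul_one]
    rw [hzero] at h1
    simp at h1
  obtain ⟨κ0, hκ0S, hκ0max⟩ := Finset.exists_max_image S (fun κ : Fin K → ℕ => (toLex κ : Lex (Fin K → ℕ))) hSne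
  have hκ0P : κ0 ∈ P := (Finset.mem_filter.mp hκ0S).1
  have hcκ0 : c κ0 ≠ 0 := (Finset.mem_filter.mp hκ0S).2
  have hmax : ∀ κ ∈ P, c κ ≠ 0 → toLex κ ≤ toLex κ0 :=
    fun κ hκ hcκ => hκ0max κ (Finset.mem_filter.mpr ⟨hκ, hcκ⟩)
  -- κ0 is lex-below lam
  have hκ0le : toLex κ0 ≤ toLex lam := by
    by_contra hlt
    push_neg at hlt
    have hcoeffR := hRHS κ0 hκ0P hmax
    rw [← e1] at hcoeffR
    have hLbound : BoundedBy (alt (bvec K μ) * alt (bvec K ν)) (δ0 + bvec K lam) := by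
      rw [← hvecsum]
      exact hBμ.mul hBν
    have hdlt : toLex (δ0 + bvec K lam) < toLex (δ0 + bvec K κ0) := by
      rw [add_comm δ0 (bvec K lam), add_comm δ0 (bvec K κ0)]
      rw [hbvec_add lam, hbvec_add κ0]
      exact lex_add_right_lt (lex_add_right_lt hlt)
    rw [hLbound.coeff_eq_zero (by rw [coe_fs]; exact hdlt)] at hcoeffR
    exact hcκ0 (by exact_mod_cast hcoeffR.symm)
  -- final coefficient extraction at lam
  have hfin := hRHS lam hlamP (fun κ hκ hcκ => le_trans (hmax κ hκ hcκ) hκ0le)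
  rw [← e1, ← hvecsum, coeff_mul_of_boundedBy hBμ hBν,
    coeff_alt_self (strictAnti_bvec hμ).injective,
    coeff_alt_self (strictAnti_bvec hν).injective, mul_one] at hfin
  exact_mod_cast hfin.symm

end LR

/-- if `λ = μ + ν` componentwise, then the Littlewood–Richardson
coefficient `c^λ_{μν}` (the coefficient of `s_λ` in the Schur expansion of `s_μ · s_ν`)
equals `1`.  The LR coefficients are characterized as the (unique) expansion coefficients
of `s_μ · s_ν` in the Schur basis. -/
theorem lr_coeff_of_sum_eq_one {K : ℕ} (μ ν lam : Fin K → ℕ)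
    (hμ : Antitone μ) (hν : Antitone ν)
    (hK : ∑ i, μ i + ∑ i, ν i = K)
    (hlam : ∀ i, lam i = μ i + ν i)
    (c : (Fin K → ℕ) → ℕ)
    (hc : schurJT K K μ * schurJT K K ν =
      ∑ κ ∈ partitionTuples K K, (c κ : MvPolynomial (Fin K) ℚ) * schurJT K K κ) :
    c lam = 1 :=
  LR.lr_main μ ν lam hμ hν hK hlam c hc
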